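/- arXiv:2509.02147 — 4 statements merged into one kernel-verified Lean document; each statement's English description precedes it below -/
import Mathlib

section
/- Let τ > 0, r > 0, Δ ≥ 0, T_c > 0, β ∈ [0, 1), x_i ∈ (0, r], and let D ≥ T_c be a real number satisfying the implicit equation D = (1/r)(Δ + τ (r − x_i)(1 − e^{−(D − β T_c)/τ})) + β T_c. Then D ≤ Δ/r + τ (1 − e^{−(D − T_c)/τ}) + T_c. -/
/-- Bound on the dwell time: if D ≥ T_c satisfies the implicit equation
    D = (1/r)(Δ + τ(r − x_i)(1 − e^{−(D − β T_c)/τ})) + β T_c, then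
    D ≤ Δ/r + τ(1 − e^{−(D − T_c)/τ}) + T_c. -/
theorem stmt_5 (τ r Δ Tc β xi D : ℝ) (hτ : 0 < τ) (hr : 0 < r)
    (hΔ : 0 ≤ Δ) (hTc : 0 < Tc) (hβ0 : 0 ≤ β) (hβ1 : β < 1)
    (hxi0 : 0 < xi) (hxir : xi ≤ r) (hD : Tc ≤ D)
    (heq : D = (1 / r) * (Δ + τ * (r - xi) * (1 - Real.exp (-(D - β * Tc) / τ)))
              + β * Tc) :
    D ≤ Δ / r + τ * (1 - Real.exp (-(D - Tc) / τ)) + Tc := by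
  set E1 := Real.exp (-(D - β * Tc) / τ) with hE1def
  set E2 := Real.exp (-(D - Tc) / τ) with hE2def
  have hE1pos : 0 < E1 := Real.exp_pos _
  have hE2pos : 0 < E2 := Real.exp_pos _
  have hβD : β * Tc ≤ D := by nlinarith
  have hE1le : E1 ≤ 1 := by
    rw [hE1def, Real.exp_le_one_iff]
    apply div_nonpos_of_nonpos_of_nonneg <;> nlinarith
  have hE2le : E2 ≤ 1 := by
    rw [hE2def, Real.exp_le_one_iff]
    apply div_nonpos_of_nonpos_of_nonneg <;> nlinarith
  have hprod : E2 * Real.exp (-((1 - β) * Tc) / τ) = E1 := by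
    rw [hE1def, hE2def, ← Real.exp_add]
    congr 1
    field_simp
    ring
  have hx : 1 - (1 - β) * Tc / τ ≤ Real.exp (-((1 - β) * Tc) / τ) := by
    have := Real.add_one_le_exp (-((1 - β) * Tc) / τ)
    have h : -((1 - β) * Tc) / τ = -((1 - β) * Tc / τ) := by ring
    linarith [h ▸ this]
  -- Step 1: D ≤ Δ/r + τ(1 - E1) + βTc
  have h1 : D ≤ Δ / r + τ * (1 - E1) + β * Tc := by
    rw [heq]
    have hm : (1 / r) * (Δ + τ * (r - xi) * (1 - E1)) ≤
        (1 / r) * (Δ + τ * r * (1 - E1)) := by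
      apply mul_le_mul_of_nonneg_left _ (by positivity)
      nlinarith [mul_nonneg (mul_nonneg hτ.le hxi0.le) (by linarith : (0:ℝ) ≤ 1 - E1)]
    have he : (1 / r) * (Δ + τ * r * (1 - E1)) = Δ / r + τ * (1 - E1) := by
      field_simp
    linarith
  -- Step 2: τ(1 - E1) + βTc ≤ τ(1 - E2) + Tc
  have h2 : τ * (E2 - E1) ≤ (1 - β) * Tc := by
    have : E2 - E1 = E2 * (1 - Real.exp (-((1 - β) * Tc) / τ)) := by
      rw [← hprod]; ring
    rw [this]
    have hfac : 1 - Real.exp (-((1 - β) * Tc) / τ) ≤ (1 - β) * Tc / τ := by linarith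
    have hfac0 : 0 ≤ 1 - Real.exp (-((1 - β) * Tc) / τ) := by
      have : Real.exp (-((1 - β) * Tc) / τ) ≤ 1 := by
        rw [Real.exp_le_one_iff]
        apply div_nonpos_of_nonpos_of_nonneg <;> nlinarith
      linarith
    calc τ * (E2 * (1 - Real.exp (-((1 - β) * Tc) / τ)))
        ≤ τ * (1 * ((1 - β) * Tc / τ)) := by
          apply mul_le_mul_of_nonneg_left _ (le_of_lt hτ)
          apply mul_le_mul hE2le hfac hfac0 zero_le_one
      _ = (1 - β) * Tc := by field_simp
  linarith
end

section
/- Let τ > 0, 0 < α < r, T_c ∈ (0, τ ln(r/(r−α))], and Δ ∈ [0, r τ ln(r/(r−α)) − r τ (1 − ((r−α)/r) e^{T_c/τ}) − r T_c]. Let β ∈ [0, 1) and x_i ∈ (0, r], and suppose D ≥ T_c satisfies the implicit equation D = (1/r)(Δ + τ (r − x_i)(1 − e^{−(D − β T_c)/τ})) + β T_c. Then D ≤ τ ln(r/(r−α)). -/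
set_option maxHeartbeats 1000000


/-- With the threshold Δ chosen in the admissible interval, any dwell time D
    satisfying the implicit firing-time equation is at most τ ln(r/(r−α)). -/
theorem stmt_8 (τ α r Tc Δ β xi D : ℝ) (hτ : 0 < τ) (hα : 0 < α) (hαr : α < r)
    (hTc0 : 0 < Tc) (hTc : Tc ≤ τ * Real.log (r / (r - α)))
    (hΔ0 : 0 ≤ Δ)
    (hΔ : Δ ≤ r * τ * Real.log (r / (r - α))
            - r * τ * (1 - ((r - α) / r) * Real.exp (Tc / τ)) - r * Tc)
    (hβ0 : 0 ≤ β) (hβ1 : β < 1) (hxi0 : 0 < xi) (hxir : xi ≤ r)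
    (hD : Tc ≤ D)
    (heq : D = (1 / r) * (Δ + τ * (r - xi) * (1 - Real.exp (-(D - β * Tc) / τ)))
              + β * Tc) :
    D ≤ τ * Real.log (r / (r - α)) := by
  by_contra hcon
  push_neg at hcon
  set τd := τ * Real.log (r / (r - α)) with hτdDef
  have hrα : 0 < r - α := by linarith
  have hr : 0 < r := by linarith
  have hdivτ : τd / τ = Real.log (r / (r - α)) := by
    rw [hτdDef]; field_simp
  have hexpneg : Real.exp (-(τd / τ)) = (r - α) / r := by
    rw [Real.exp_neg, hdivτ, Real.exp_log (by positivity), inv_div]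
  set E1 := Real.exp (-(D - β * Tc) / τ) with hE1def
  set E2 := Real.exp (-(τd - β * Tc) / τ) with hE2def
  set u := Real.exp (-(τd - Tc) / τ) with hudef
  have hβTc : β * Tc ≤ Tc := by nlinarith
  have hTcτd : Tc ≤ τd := hTc
  have hu : u = (r - α) / r * Real.exp (Tc / τ) := by
    rw [hudef, ← hexpneg, ← Real.exp_add]
    ring_nf
  have hE2le : E2 ≤ 1 := by
    rw [hE2def, ← Real.exp_zero]
    apply Real.exp_le_exp.mpr
    have h0 : 0 ≤ τd - β * Tc := by linarith
    have := div_nonneg h0 hτ.le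
    rw [neg_div]; linarith
  have hule : u ≤ 1 := by
    rw [hudef, ← Real.exp_zero]
    apply Real.exp_le_exp.mpr
    have h0 : 0 ≤ τd - Tc := by linarith
    have := div_nonneg h0 hτ.le
    rw [neg_div]; linarith
  have hE2pos : 0 < E2 := Real.exp_pos _
  have hupos : 0 < u := Real.exp_pos _
  have hrxi : 0 ≤ r - xi := by linarith
  -- (A): τ*(E2 - E1) ≤ E2*(D - τd)
  have h3' : τ * (E2 - E1) ≤ E2 * (D - τd) := by
    set q := Real.exp (-(D - τd) / τ) with hqdef
    have hsplit : E1 = E2 * q := by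
      rw [hE1def, hE2def, hqdef, ← Real.exp_add]; ring_nf
    have h1 : -(D - τd) / τ + 1 ≤ q := Real.add_one_le_exp _
    rw [neg_div] at h1
    have h2 : τ * (1 - q) ≤ D - τd := by
      have := (le_div_iff₀ hτ).mp (by linarith : 1 - q ≤ (D - τd) / τ)
      linarith [this]
    rw [hsplit]
    nlinarith [hE2pos.le, mul_le_mul_of_nonneg_left h2 hE2pos.le]
  -- (B): τ*(u - E2) ≤ (1-β)*Tc
  have h4' : τ * (u - E2) ≤ (1 - β) * Tc := by
    set w := Real.exp (-((1 - β) * Tc) / τ) with hwdef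
    have hsplit : E2 = u * w := by
      rw [hE2def, hudef, hwdef, ← Real.exp_add]; ring_nf
    have h1 : -((1 - β) * Tc) / τ + 1 ≤ w := Real.add_one_le_exp _
    rw [neg_div] at h1
    have h2 : τ * (1 - w) ≤ (1 - β) * Tc := by
      have := (le_div_iff₀ hτ).mp (by linarith : 1 - w ≤ ((1 - β) * Tc) / τ)
      linarith [this]
    have hs : 0 ≤ (1 - β) * Tc := by nlinarith
    rw [hsplit]
    nlinarith [hupos.le, mul_le_mul_of_nonneg_left h2 hupos.le,
      mul_le_mul_of_nonneg_right hule hs]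
  -- implicit equation multiplied by r
  have heq' : r * D = Δ + τ * (r - xi) * (1 - E1) + r * (β * Tc) := by
    have h := congrArg (fun x => r * x) heq
    simp only [mul_add] at h
    have h2 : r * (1 / r * (Δ + τ * (r - xi) * (1 - E1)))
        = Δ + τ * (r - xi) * (1 - E1) := by
      field_simp
    linarith [h, h2]
  -- Δ bound rewritten with u
  have hΔ' : Δ ≤ r * τd - r * τ * (1 - u) - r * Tc := by
    have hrτd : r * τd = r * τ * Real.log (r / (r - α)) := by rw [hτdDef]; ring
    rw [hu]
    linarith [hΔ, hrτd]
  -- assembled product facts (linear in monomials)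
  have h3 : (r - xi) * (τ * (E2 - E1)) ≤ (r - xi) * (E2 * (D - τd)) :=
    mul_le_mul_of_nonneg_left h3' hrxi
  have h4 : (r - xi) * (τ * (u - E2)) ≤ (r - xi) * ((1 - β) * Tc) :=
    mul_le_mul_of_nonneg_left h4' hrxi
  have h5 : (r - xi) * (E2 * (D - τd)) ≤ (r - xi) * (D - τd) := by
    apply mul_le_mul_of_nonneg_left _ hrxi
    nlinarith [hE2le, hcon]
  have h6 : τ * (xi * u) ≤ τ * xi := by
    have : xi * u ≤ xi := by nlinarith [hule]
    nlinarith [this]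
  have h7 : 0 ≤ xi * ((1 - β) * Tc) :=
    mul_nonneg hxi0.le (mul_nonneg (by linarith) hTc0.le)
  have hfin : 0 < xi * (D - τd) := by
    apply mul_pos hxi0; linarith
  nlinarith [heq', hΔ', h3, h4, h5, h6, h7, hfin]
end

section
/- Let τ > 0, 0 < α < r, x_i ∈ (0, r], and 0 ≤ D ≤ τ ln(r/(r−α)). Then r − e^{−D/τ}(r − x_i) − α ≤ ((r−α)/r) x_i. -/
/-- Per-cycle contraction: if the dwell time D is at most τ ln(r/(r−α)), then
    the error just after the next pellet launch satisfies
    r − e^{−D/τ}(r − x_i) − α ≤ ((r−α)/r) x_i. -/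
theorem stmt_9 (τ α r xi D : ℝ) (hτ : 0 < τ) (hα : 0 < α) (hαr : α < r)
    (hxi0 : 0 < xi) (hxir : xi ≤ r)
    (hD0 : 0 ≤ D) (hD : D ≤ τ * Real.log (r / (r - α))) :
    r - Real.exp (-D / τ) * (r - xi) - α ≤ ((r - α) / r) * xi := by
  have hr : 0 < r := hα.trans hαr
  have hra : 0 < r - α := sub_pos.mpr hαr
  have hq : (0:ℝ) < (r - α) / r := div_pos hra hr
  have hkey : (r - α) / r ≤ Real.exp (-D / τ) := by
    rw [← Real.log_le_iff_le_exp hq]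
    have : Real.log ((r - α) / r) = - Real.log (r / (r - α)) := by
      rw [← Real.log_inv, inv_div]
    rw [this, neg_div, neg_le_neg_iff, div_le_iff₀ hτ, mul_comm]
    exact hD
  have h2 : ((r - α) / r) * (r - xi) ≤ Real.exp (-D / τ) * (r - xi) :=
    mul_le_mul_of_nonneg_right hkey (sub_nonneg.mpr hxir)
  have : r - ((r - α) / r) * (r - xi) - α = ((r - α) / r) * xi := by
    field_simp; ring
  linarith
end

section
/- Let τ > 0, 0 < α < r, x_i ∈ (0, r], and 0 ≤ D ≤ τ ln(r/(r−α)). Then: (i) for every s ∈ [0, D], −α < r − e^{−s/τ}(r − x_i) ≤ ((r−α)/r) x_i + α; and (ii) the post-launch value y := r − e^{−D/τ}(r − x_i) − α satisfies −α < y ≤ ((r−α)/r) x_i. -/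
/-- One control cycle: flow for time D ≤ τ ln(r/(r−α)) from x_i ∈ (0, r], then a
    pellet launch decreasing the error by α. During the flow the error stays in
    (−α, ((r−α)/r) x_i + α], and the post-launch error lies in (−α, ((r−α)/r) x_i]. -/
theorem stmt_10 (τ α r xi D : ℝ) (hτ : 0 < τ) (hα : 0 < α) (hαr : α < r)
    (hxi0 : 0 < xi) (hxir : xi ≤ r)
    (hD0 : 0 ≤ D) (hD : D ≤ τ * Real.log (r / (r - α))) :
    (∀ s, 0 ≤ s → s ≤ D →
      -α < r - Real.exp (-s / τ) * (r - xi) ∧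
      r - Real.exp (-s / τ) * (r - xi) ≤ ((r - α) / r) * xi + α) ∧
    (-α < r - Real.exp (-D / τ) * (r - xi) - α ∧
      r - Real.exp (-D / τ) * (r - xi) - α ≤ ((r - α) / r) * xi) := by
  have hr : (0:ℝ) < r := hα.trans hαr
  have hrα : (0:ℝ) < r - α := by linarith
  have hkey : (r - α) / r ≤ Real.exp (-D / τ) := by
    have h1 : -D / τ ≥ Real.log ((r - α) / r) := by
      have : Real.log (r / (r - α)) = - Real.log ((r - α) / r) := by
        rw [← Real.log_inv]; congr 1; field_simp
      rw [this] at hD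
      rw [ge_iff_le, le_div_iff₀ hτ]
      nlinarith [hD]
    calc (r - α) / r = Real.exp (Real.log ((r - α) / r)) := by
          rw [Real.exp_log (by positivity)]
      _ ≤ Real.exp (-D / τ) := Real.exp_le_exp.mpr h1
  have hmain : ∀ s, 0 ≤ s → s ≤ D →
      -α < r - Real.exp (-s / τ) * (r - xi) ∧
      r - Real.exp (-s / τ) * (r - xi) ≤ ((r - α) / r) * xi + α := by
    intro s hs0 hsD
    have hle1 : Real.exp (-s / τ) ≤ 1 :=
      Real.exp_le_one_iff.mpr (by rw [neg_div]; exact neg_nonpos.mpr (div_nonneg hs0 hτ.le))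
    have hge : (r - α) / r ≤ Real.exp (-s / τ) := by
      refine hkey.trans (Real.exp_le_exp.mpr ((div_le_div_iff_of_pos_right hτ).mpr (by linarith)))
    constructor
    · nlinarith [mul_le_mul_of_nonneg_right hle1 (by linarith : (0:ℝ) ≤ r - xi)]
    · have h2 : (r - α) / r * (r - xi) ≤ Real.exp (-s / τ) * (r - xi) :=
        mul_le_mul_of_nonneg_right hge (by linarith)
      have h3 : (r - α) / r * r = r - α := by field_simp
      nlinarith [h2]
  refine ⟨hmain, ?_, ?_⟩
  · have := (hmain D hD0 le_rfl).1
    have hle1 : Real.exp (-D / τ) ≤ 1 :=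
      Real.exp_le_one_iff.mpr (by rw [neg_div]; exact neg_nonpos.mpr (div_nonneg hD0 hτ.le))
    nlinarith [mul_le_mul_of_nonneg_right hle1 (by linarith : (0:ℝ) ≤ r - xi)]
  · have h2 : (r - α) / r * (r - xi) ≤ Real.exp (-D / τ) * (r - xi) :=
      mul_le_mul_of_nonneg_right hkey (by linarith)
    have h3 : (r - α) / r * r = r - α := by field_simp
    nlinarith [h2]
end
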